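/- arXiv:2412.08399 — 3 statements merged into one kernel-verified Lean document; each statement's English description precedes it below -/
import Mathlib

section
/- With v_2 defined by the recursive Mex algorithm, for every n ≥ 0 one has v_2(n+1) - v_2(n) ∈ {2, 3, 4, 5, 6, 7, 8}. -/
/-- Minimum excluded value of a set of natural numbers. -/
noncomputable def mex (S : Set ℕ) : ℕ := sInf {m : ℕ | m ∉ S}

/-- Coordinates of a set of triples. -/
def coords (G : Set (ℕ × ℕ × ℕ)) : Set ℕ :=
  {k | ∃ x ∈ G, k = x.1 ∨ k = x.2.1 ∨ k = x.2.2}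

/-- Pairwise coordinate differences of a set of triples. -/
def diffs (G : Set (ℕ × ℕ × ℕ)) : Set ℕ :=
  {d | ∃ x ∈ G, d = x.2.1 - x.1 ∨ d = x.2.2 - x.2.1 ∨ d = x.2.2 - x.1}

/-- One step of the Mex algorithm: the next P-position. -/
noncomputable def step (G : Set (ℕ × ℕ × ℕ)) : ℕ × ℕ × ℕ :=
  let F := coords G
  let D := diffs G
  let a := mex F
  let b := mex ((fun d => a + d) '' D ∪ Set.Icc 1 a ∪ F)
  let c := mex ((fun d => b + d) '' D ∪ Set.Icc 1 b ∪ F)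
  (a, b, c)

/-- The sets `G_n` of P-positions computed by the Mex algorithm. -/
noncomputable def Gset : ℕ → Set (ℕ × ℕ × ℕ)
  | 0 => {(0, 0, 0)}
  | n + 1 => Gset n ∪ {step (Gset n)}

/-- The `n`-th P-position `(v_1(n), v_2(n), v_3(n))`. -/
noncomputable def v : ℕ → ℕ × ℕ × ℕ
  | 0 => (0, 0, 0)
  | n + 1 => step (Gset n)

noncomputable def v1 (n : ℕ) : ℕ := (v n).1
noncomputable def v2 (n : ℕ) : ℕ := (v n).2.1
noncomputable def v3 (n : ℕ) : ℕ := (v n).2.2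

/-- `F_n`: the set of coordinates of elements of `G_n`. -/
noncomputable def Fset (n : ℕ) : Set ℕ := coords (Gset n)

/-- `D_n`: the set of pairwise coordinate differences over `G_n`. -/
noncomputable def Dset (n : ℕ) : Set ℕ := diffs (Gset n)

section Basics

lemma mex_le {S : Set ℕ} {m : ℕ} (h : m ∉ S) : mex S ≤ m := Nat.sInf_le h

lemma mem_of_lt_mex {S : Set ℕ} {m : ℕ} (h : m < mex S) : m ∈ S := by
  by_contra hm
  exact absurd (mex_le hm) (by omega)

lemma mex_not_mem {S : Set ℕ} (hS : S.Finite) : mex S ∉ S := by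
  have h1 : {m : ℕ | m ∉ S}.Nonempty := by
    have h2 : Sᶜ.Infinite := hS.infinite_compl
    exact h2.nonempty
  exact Nat.sInf_mem h1

lemma coords_finite {G : Set (ℕ × ℕ × ℕ)} (h : G.Finite) : (coords G).Finite := by
  have hsub : coords G ⊆ (fun x : ℕ × ℕ × ℕ => x.1) '' G ∪
      ((fun x : ℕ × ℕ × ℕ => x.2.1) '' G ∪ (fun x : ℕ × ℕ × ℕ => x.2.2) '' G) := by
    rintro k ⟨x, hx, hk | hk | hk⟩
    · exact Or.inl ⟨x, hx, hk.symm⟩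
    · exact Or.inr (Or.inl ⟨x, hx, hk.symm⟩)
    · exact Or.inr (Or.inr ⟨x, hx, hk.symm⟩)
  exact ((h.image _).union ((h.image _).union (h.image _))).subset hsub

lemma diffs_finite {G : Set (ℕ × ℕ × ℕ)} (h : G.Finite) : (diffs G).Finite := by
  have hsub : diffs G ⊆ (fun x : ℕ × ℕ × ℕ => x.2.1 - x.1) '' G ∪
      ((fun x : ℕ × ℕ × ℕ => x.2.2 - x.2.1) '' G ∪ (fun x : ℕ × ℕ × ℕ => x.2.2 - x.1) '' G) := by
    rintro k ⟨x, hx, hk | hk | hk⟩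
    · exact Or.inl ⟨x, hx, hk.symm⟩
    · exact Or.inr (Or.inl ⟨x, hx, hk.symm⟩)
    · exact Or.inr (Or.inr ⟨x, hx, hk.symm⟩)
  exact ((h.image _).union ((h.image _).union (h.image _))).subset hsub

lemma gset_finite (n : ℕ) : (Gset n).Finite := by
  induction n with
  | zero => exact Set.finite_singleton _
  | succ n ih => exact ih.union (Set.finite_singleton _)

lemma fset_finite (n : ℕ) : (Fset n).Finite := coords_finite (gset_finite n)
lemma dset_finite (n : ℕ) : (Dset n).Finite := diffs_finite (gset_finite n)

lemma mem_gset {n : ℕ} {x : ℕ × ℕ × ℕ} : x ∈ Gset n ↔ ∃ k ≤ n, v k = x := by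
  induction n with
  | zero =>
    constructor
    · intro h; exact ⟨0, le_refl 0, h.symm⟩
    · rintro ⟨k, hk, hv⟩
      interval_cases k
      exact hv ▸ rfl
  | succ n ih =>
    show x ∈ Gset n ∪ {step (Gset n)} ↔ _
    constructor
    · rintro (h | h)
      · obtain ⟨k, hk, hv⟩ := ih.mp h
        exact ⟨k, by omega, hv⟩
      · exact ⟨n + 1, le_refl _, h.symm⟩
    · rintro ⟨k, hk, hv⟩
      rcases Nat.lt_succ_iff_lt_or_eq.mp (Nat.lt_succ_of_le hk) with h' | h'
      · exact Or.inl (ih.mpr ⟨k, by omega, hv⟩)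
      · subst h'; exact Or.inr hv.symm

lemma mem_Fset {n x : ℕ} : x ∈ Fset n ↔ ∃ k ≤ n, x = v1 k ∨ x = v2 k ∨ x = v3 k := by
  constructor
  · rintro ⟨y, hy, hc⟩
    obtain ⟨k, hk, hv⟩ := mem_gset.mp hy
    exact ⟨k, hk, by subst hv; exact hc⟩
  · rintro ⟨k, hk, hc⟩
    exact ⟨v k, mem_gset.mpr ⟨k, hk, rfl⟩, hc⟩

lemma mem_Dset {n x : ℕ} : x ∈ Dset n ↔
    ∃ k ≤ n, x = v2 k - v1 k ∨ x = v3 k - v2 k ∨ x = v3 k - v1 k := by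
  constructor
  · rintro ⟨y, hy, hc⟩
    obtain ⟨k, hk, hv⟩ := mem_gset.mp hy
    exact ⟨k, hk, by subst hv; exact hc⟩
  · rintro ⟨k, hk, hc⟩
    exact ⟨v k, mem_gset.mpr ⟨k, hk, rfl⟩, hc⟩

lemma v1_succ (n : ℕ) : v1 (n + 1) = mex (Fset n) := rfl

lemma v2_succ (n : ℕ) : v2 (n + 1) =
    mex ((fun d => v1 (n + 1) + d) '' Dset n ∪ Set.Icc 1 (v1 (n + 1)) ∪ Fset n) := rfl

lemma v3_succ (n : ℕ) : v3 (n + 1) =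
    mex ((fun d => v2 (n + 1) + d) '' Dset n ∪ Set.Icc 1 (v2 (n + 1)) ∪ Fset n) := rfl

lemma Fset_mono {n : ℕ} : Fset n ⊆ Fset (n + 1) := by
  intro x hx
  rw [mem_Fset] at hx ⊢
  obtain ⟨k, hk, h⟩ := hx
  exact ⟨k, by omega, h⟩

lemma Dset_mono {n : ℕ} : Dset n ⊆ Dset (n + 1) := by
  intro x hx
  rw [mem_Dset] at hx ⊢
  obtain ⟨k, hk, h⟩ := hx
  exact ⟨k, by omega, h⟩

lemma v1_zero : v1 0 = 0 := rfl
lemma v2_zero : v2 0 = 0 := rfl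
lemma v3_zero : v3 0 = 0 := rfl

lemma mem_Fset_of_le_v1 {n m : ℕ} (h : m ≤ v1 n) : m ∈ Fset n := by
  induction n with
  | zero =>
    have : m = 0 := by have : v1 0 = 0 := rfl; omega
    subst this
    exact mem_Fset.mpr ⟨0, le_refl _, Or.inl rfl⟩
  | succ n ih =>
    rcases Nat.lt_or_ge m (v1 (n + 1)) with h' | h'
    · rw [v1_succ] at h'
      exact Fset_mono (mem_of_lt_mex h')
    · have : m = v1 (n + 1) := by omega
      subst this
      exact mem_Fset.mpr ⟨n + 1, le_refl _, Or.inl rfl⟩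

noncomputable def pv (k : ℕ) : ℕ := v2 k - v1 k
noncomputable def qv (k : ℕ) : ℕ := v3 k - v2 k
noncomputable def Mx (n : ℕ) : ℕ := sInf {x : ℕ | 0 < x ∧ x ∉ Dset n}


lemma Mx_spec (n : ℕ) : 0 < Mx n ∧ Mx n ∉ Dset n := by
  have h1 : {x : ℕ | 0 < x ∧ x ∉ Dset n}.Nonempty := by
    have h2 : (Dset n ∪ {0} : Set ℕ).Finite := (dset_finite n).union (Set.finite_singleton 0)
    obtain ⟨x, hx⟩ := h2.infinite_compl.nonempty
    simp only [Set.mem_compl_iff, Set.mem_union, Set.mem_singleton_iff] at hx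
    push_neg at hx
    exact ⟨x, by omega, hx.1⟩
  exact Nat.sInf_mem h1

lemma Mx_min {n x : ℕ} (h0 : 0 < x) (h : x < Mx n) : x ∈ Dset n := by
  by_contra hm
  have : Mx n ≤ x := Nat.sInf_le (show x ∈ {x : ℕ | 0 < x ∧ x ∉ Dset n} from ⟨h0, hm⟩)
  omega

lemma Mx_le {n x : ℕ} (h0 : 0 < x) (h : x ∉ Dset n) : Mx n ≤ x :=
  Nat.sInf_le (show x ∈ {x : ℕ | 0 < x ∧ x ∉ Dset n} from ⟨h0, h⟩)

end Basics

lemma chain_c {f : ℕ → ℕ} {c n : ℕ} (h : ∀ k, k < n → f k + c ≤ f (k + 1)) :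
    ∀ j k, j < k → k ≤ n → f j + c ≤ f k := by
  intro j k
  induction k with
  | zero => omega
  | succ m ih =>
    intro hjk hk
    rcases Nat.lt_or_ge j m with h' | h'
    · have h1 := ih h' (by omega)
      have h2 := h m (by omega)
      omega
    · have : j = m := by omega
      subst this
      exact h j (by omega)

structure MexInv (n : ℕ) : Prop where
  ord : ∀ k ≤ n, v1 k + pv k = v2 k ∧ v2 k + qv k = v3 k
  amono : ∀ k < n, v1 k < v1 (k + 1)
  aub : ∀ k < n, v1 (k + 1) ≤ v1 k + 4
  pgap : ∀ k < n, pv k < pv (k + 1)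
  qeq : ∀ k < n, qv (k + 1) = Mx k
  plb : ∀ k < n, Mx k ≤ pv (k + 1)
  MP : ∀ k ≤ n, pv k < Mx k
  Mub : ∀ k ≤ n, Mx k ≤ pv k + 2
  bgap : ∀ k < n, v2 k + 2 ≤ v2 (k + 1)
  bub : ∀ k < n, v2 (k + 1) ≤ v2 k + 8
  cgap : ∀ k < n, v3 k + 3 ≤ v3 (k + 1)

lemma pv_zero : pv 0 = 0 := rfl
lemma qv_zero : qv 0 = 0 := rfl

lemma mexinv_zero : MexInv 0 := by
  have hM0 : Mx 0 ≤ 1 := by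
    apply Mx_le one_pos
    rw [mem_Dset]
    rintro ⟨k, hk, hc⟩
    interval_cases k
    simp [v1_zero, v2_zero, v3_zero] at hc
  refine ⟨?_, ?_, ?_, ?_, ?_, ?_, ?_, ?_, ?_, ?_, ?_⟩ <;>
    try (intro k hk; omega)
  · intro k hk
    interval_cases k
    exact ⟨rfl, rfl⟩
  · intro k hk
    interval_cases k
    rw [pv_zero]
    exact (Mx_spec 0).1
  · intro k hk
    interval_cases k
    rw [pv_zero]
    omega

section StepHelpers
variable {n : ℕ}

lemma v1_not_mem (n : ℕ) : v1 (n + 1) ∉ Fset n := by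
  rw [v1_succ]; exact mex_not_mem (fset_finite n)

lemma v1_min {n m : ℕ} (h : m < v1 (n + 1)) : m ∈ Fset n := by
  rw [v1_succ] at h; exact mem_of_lt_mex h

lemma v1_lt_succ (n : ℕ) : v1 n < v1 (n + 1) := by
  rcases Nat.lt_or_ge (v1 n) (v1 (n + 1)) with h | h
  · exact h
  · exact absurd (mem_Fset_of_le_v1 h) (v1_not_mem n)

lemma amono_le (H : MexInv n) : ∀ k ≤ n, v1 k ≤ v1 n := by
  intro k hk
  rcases Nat.eq_or_lt_of_le hk with h | h
  · subst h; omega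
  · have := chain_c (c := 1) (f := v1) (fun k hk => H.amono k hk) k n h le_rfl
    omega

lemma Mstrict (H : MexInv n) : ∀ k < n, Mx k < Mx (k + 1) :=
  fun k hk => lt_of_le_of_lt (H.plb k hk) (H.MP (k + 1) hk)

lemma Mmono_le (H : MexInv n) : ∀ k ≤ n, Mx k ≤ Mx n := by
  intro k hk
  rcases Nat.eq_or_lt_of_le hk with h | h
  · subst h; omega
  · have := chain_c (c := 1) (f := Mx) (fun k hk => Mstrict H k hk) k n h le_rfl
    omega

lemma qlep (H : MexInv n) : ∀ k ≤ n, qv k ≤ pv k := by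
  intro k hk
  rcases Nat.eq_zero_or_pos k with h | h
  · subst h; rw [pv_zero, qv_zero]
  · obtain ⟨m, rfl⟩ := Nat.exists_eq_add_of_lt h
    simp only [Nat.zero_add] at *
    rw [H.qeq m (by omega)]
    exact H.plb m (by omega)

lemma qstep (H : MexInv n) : ∀ k < n, qv k + 1 ≤ qv (k + 1) := by
  intro k hk
  rcases Nat.eq_zero_or_pos k with h | h
  · subst h
    rw [H.qeq 0 hk, qv_zero]
    exact (Mx_spec 0).1
  · obtain ⟨m, rfl⟩ := Nat.exists_eq_add_of_lt h
    simp only [Nat.zero_add] at *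
    rw [H.qeq (m + 1) hk, H.qeq m (by omega)]
    exact Mstrict H m (by omega)

lemma Rstep (H : MexInv n) : ∀ k < n, (pv k + qv k) + 2 ≤ pv (k + 1) + qv (k + 1) := by
  intro k hk
  have h1 := H.pgap k hk
  have h2 := qstep H k hk
  omega

lemma Rpair (H : MexInv n) {j k : ℕ} (hj : j ≤ n) (hk : k ≤ n) (hne : j ≠ k) :
    (pv j + qv j) + 2 ≤ pv k + qv k ∨ (pv k + qv k) + 2 ≤ pv j + qv j := by
  rcases Nat.lt_or_ge j k with h | h
  · exact Or.inl (chain_c (f := fun k => pv k + qv k) (Rstep H) j k h hk)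
  · exact Or.inr (chain_c (f := fun k => pv k + qv k) (Rstep H) k j (by omega) hj)

lemma Rle (H : MexInv n) : ∀ k ≤ n, pv k + qv k ≤ pv n + qv n := by
  intro k hk
  rcases Nat.eq_or_lt_of_le hk with h | h
  · subst h; omega
  · have h2 : pv k + qv k + 2 ≤ pv n + qv n := chain_c (f := fun k => pv k + qv k) (Rstep H) k n h le_rfl
    omega

lemma bpair (H : MexInv n) {j k : ℕ} (hj : j ≤ n) (hk : k ≤ n) (hne : j ≠ k) :
    v2 j + 2 ≤ v2 k ∨ v2 k + 2 ≤ v2 j := by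
  rcases Nat.lt_or_ge j k with h | h
  · exact Or.inl (chain_c H.bgap j k h hk)
  · exact Or.inr (chain_c H.bgap k j (by omega) hj)

lemma cpair (H : MexInv n) {j k : ℕ} (hj : j ≤ n) (hk : k ≤ n) (hne : j ≠ k) :
    v3 j + 3 ≤ v3 k ∨ v3 k + 3 ≤ v3 j := by
  rcases Nat.lt_or_ge j k with h | h
  · exact Or.inl (chain_c H.cgap j k h hk)
  · exact Or.inr (chain_c H.cgap k j (by omega) hj)

lemma ble (H : MexInv n) : ∀ k ≤ n, v2 k ≤ v2 n := by
  intro k hk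
  rcases Nat.eq_or_lt_of_le hk with h | h
  · subst h; omega
  · have := chain_c H.bgap k n h le_rfl
    omega

lemma cle (H : MexInv n) : ∀ k ≤ n, v3 k ≤ v3 n := by
  intro k hk
  rcases Nat.eq_or_lt_of_le hk with h | h
  · subst h; omega
  · have := chain_c H.cgap k n h le_rfl
    omega

lemma bboundD (H : MexInv n) : ∀ j ≤ n, v2 j < v1 (n + 1) + Mx n := by
  intro j hj
  have o := (H.ord j hj).1
  have h1 := H.MP j hj
  have h2 := Mmono_le H j hj
  have h3 := amono_le H j hj
  have h4 := v1_lt_succ n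
  omega

lemma Fhigh (H : MexInv n) {x : ℕ} (hx : Mx n ≤ x) (hF : v1 (n + 1) + x ∈ Fset n) :
    ∃ k ≤ n, v1 (n + 1) + x = v3 k := by
  rw [mem_Fset] at hF
  obtain ⟨k, hk, hc⟩ := hF
  rcases hc with h | h | h
  · exfalso
    have h1 := amono_le H k hk
    have h2 := v1_lt_succ n
    have h3 := (Mx_spec n).1
    omega
  · exfalso
    have h1 := bboundD H k hk
    omega
  · exact ⟨k, hk, h⟩

lemma Dhigh (H : MexInv n) {d : ℕ} (hd : d ∈ Dset n) (hgt : Mx n < d) :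
    ∃ k, 1 ≤ k ∧ k ≤ n ∧ d = pv k + qv k := by
  rw [mem_Dset] at hd
  obtain ⟨k, hk, hc⟩ := hd
  have o := H.ord k hk
  have hMP := H.MP k hk
  have hq := qlep H k hk
  have hMm := Mmono_le H k hk
  rcases hc with h | h | h
  · exfalso
    have h' : d = pv k := h
    omega
  · exfalso
    have h' : d = qv k := h
    omega
  · rcases Nat.eq_zero_or_pos k with h0 | h0
    · exfalso
      subst h0
      rw [v3_zero, v1_zero] at h
      omega
    · exact ⟨k, h0, hk, by omega⟩

end StepHelpers

section MainSteps
variable {n : ℕ}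

lemma step_a (H : MexInv n) : v1 (n + 1) ≤ v1 n + 4 := by
  by_contra hcon
  push_neg at hcon
  have hcl : ∀ i, 1 ≤ i → i ≤ 4 → ∃ k ≤ n, (v1 n + i = v2 k ∨ v1 n + i = v3 k) := by
    intro i h1 h2
    have hmem : v1 n + i ∈ Fset n := v1_min (by omega)
    rw [mem_Fset] at hmem
    obtain ⟨k, hk, hc⟩ := hmem
    rcases hc with h | h | h
    · exfalso
      have := amono_le H k hk
      omega
    · exact ⟨k, hk, Or.inl h⟩
    · exact ⟨k, hk, Or.inr h⟩
  obtain ⟨k1, hk1, h1⟩ := hcl 1 (by omega) (by omega)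
  obtain ⟨k2, hk2, h2⟩ := hcl 2 (by omega) (by omega)
  obtain ⟨k3, hk3, h3⟩ := hcl 3 (by omega) (by omega)
  obtain ⟨k4, hk4, h4⟩ := hcl 4 (by omega) (by omega)
  rcases h2 with hB2 | hC2 <;> rcases h3 with hB3 | hC3
  · have hne : k2 ≠ k3 := fun he => by subst he; omega
    rcases bpair H hk2 hk3 hne with h | h <;> omega
  · rcases h1 with hB1 | hC1
    · have hne : k1 ≠ k2 := fun he => by subst he; omega
      rcases bpair H hk1 hk2 hne with h | h <;> omega
    · have hne : k1 ≠ k3 := fun he => by subst he; omega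
      rcases cpair H hk1 hk3 hne with h | h <;> omega
  · rcases h4 with hB4 | hC4
    · have hne : k3 ≠ k4 := fun he => by subst he; omega
      rcases bpair H hk3 hk4 hne with h | h <;> omega
    · have hne : k2 ≠ k4 := fun he => by subst he; omega
      rcases cpair H hk2 hk4 hne with h | h <;> omega
  · have hne : k2 ≠ k3 := fun he => by subst he; omega
    rcases cpair H hk2 hk3 hne with h | h <;> omega

lemma step_b (H : MexInv n) :
    v1 (n + 1) + pv (n + 1) = v2 (n + 1) ∧ Mx n ≤ pv (n + 1) ∧ pv (n + 1) ≤ Mx n + 2 ∧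
    pv (n + 1) ∉ Dset n ∧
    (∀ x, 1 ≤ x → x < pv (n + 1) → x ∈ Dset n ∨ v1 (n + 1) + x ∈ Fset n) := by
  set a := v1 (n + 1) with ha
  set S := (fun d => a + d) '' Dset n ∪ Set.Icc 1 a ∪ Fset n with hS
  have hSfin : S.Finite :=
    (((dset_finite n).image _).union (Set.finite_Icc 1 a)).union (fset_finite n)
  have hbmex : v2 (n + 1) = mex S := v2_succ n
  have hb_not : v2 (n + 1) ∉ S := by rw [hbmex]; exact mex_not_mem hSfin
  have hb_min : ∀ m, m < v2 (n + 1) → m ∈ S := by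
    intro m hm; rw [hbmex] at hm; exact mem_of_lt_mex hm
  have h0F : (0 : ℕ) ∈ Fset n := mem_Fset.mpr ⟨0, by omega, Or.inl v1_zero.symm⟩
  have hallS : ∀ m, m ≤ a → m ∈ S := by
    intro m hm
    rcases Nat.eq_zero_or_pos m with h | h
    · subst h; exact Or.inr h0F
    · exact Or.inl (Or.inr (Set.mem_Icc.mpr ⟨h, hm⟩))
  have hba : a < v2 (n + 1) := by
    rcases Nat.lt_or_ge a (v2 (n + 1)) with h | h
    · exact h
    · exact absurd (hallS _ h) hb_not
  have hordb : a + pv (n + 1) = v2 (n + 1) := by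
    have : pv (n + 1) = v2 (n + 1) - v1 (n + 1) := rfl
    omega
  have hmemS : ∀ x, 1 ≤ x → (a + x ∈ S ↔ (x ∈ Dset n ∨ a + x ∈ Fset n)) := by
    intro x hx
    constructor
    · rintro ((⟨d, hd, hde⟩ | hIcc) | hF)
      · have hde' : a + d = a + x := hde
        have : x = d := by omega
        subst this; exact Or.inl hd
      · rw [Set.mem_Icc] at hIcc; omega
      · exact Or.inr hF
    · rintro (h | h)
      · exact Or.inl (Or.inl ⟨x, h, rfl⟩)
      · exact Or.inr h
  have hp1 : 1 ≤ pv (n + 1) := by omega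
  have hpnotD : pv (n + 1) ∉ Dset n ∧ a + pv (n + 1) ∉ Fset n := by
    have h1 := hb_not
    rw [← hordb] at h1
    have h3 : ¬(pv (n + 1) ∈ Dset n ∨ a + pv (n + 1) ∈ Fset n) :=
      fun hc => h1 ((hmemS _ hp1).mpr hc)
    tauto
  have hpmin : ∀ x, 1 ≤ x → x < pv (n + 1) → x ∈ Dset n ∨ a + x ∈ Fset n := by
    intro x h1 h2
    exact (hmemS x h1).mp (hb_min _ (by omega))
  have hplb : Mx n ≤ pv (n + 1) := by
    by_contra h
    exact hpnotD.1 (Mx_min hp1 (by omega))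
  have hMpos := (Mx_spec n).1
  have hMnotD := (Mx_spec n).2
  have hpub : pv (n + 1) ≤ Mx n + 2 := by
    by_cases h0 : a + Mx n ∈ Fset n
    · obtain ⟨k0, hk0, hc0⟩ := Fhigh H le_rfl h0
      have hnF : ∀ i, 1 ≤ i → i ≤ 2 → a + (Mx n + i) ∉ Fset n := by
        intro i hi1 hi2 hmem
        obtain ⟨k, hk, hck⟩ := Fhigh H (show Mx n ≤ Mx n + i by omega) hmem
        have hne : k ≠ k0 := fun he => by subst he; omega
        rcases cpair H hk hk0 hne with h | h <;> omega
      by_cases h2 : Mx n + 1 ∈ Dset n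
      · have h3 : Mx n + 2 ∉ Dset n := by
          intro hmem
          obtain ⟨j, hj1, hjn, hjv⟩ := Dhigh H h2 (by omega)
          obtain ⟨k, hk1, hkn, hkv⟩ := Dhigh H hmem (by omega)
          have hne : j ≠ k := fun he => by subst he; omega
          rcases Rpair H hjn hkn hne with h | h <;> omega
        have h4 : a + (Mx n + 2) ∉ S := by
          rw [hmemS _ (by omega)]
          push_neg
          exact ⟨h3, hnF 2 (by omega) le_rfl⟩
        have h5 := mex_le h4
        rw [← hbmex] at h5
        omega
      · have h4 : a + (Mx n + 1) ∉ S := by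
          rw [hmemS _ (by omega)]
          push_neg
          exact ⟨h2, hnF 1 le_rfl (by omega)⟩
        have h5 := mex_le h4
        rw [← hbmex] at h5
        omega
    · have h4 : a + Mx n ∉ S := by
        rw [hmemS _ hMpos]
        push_neg
        exact ⟨hMnotD, h0⟩
      have h5 := mex_le h4
      rw [← hbmex] at h5
      omega
  exact ⟨hordb, hplb, hpub, hpnotD.1, hpmin⟩

end MainSteps

section QStep
variable {n : ℕ}

lemma maxF (H : MexInv n) : ∀ y ∈ Fset n, y ≤ v3 n := by
  intro y hy
  rw [mem_Fset] at hy
  obtain ⟨k, hk, hc⟩ := hy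
  have hon := H.ord n le_rfl
  rcases hc with h | h | h
  · have h1 := amono_le H k hk
    omega
  · have h1 := ble H k hk
    omega
  · have h1 := cle H k hk
    omega

lemma step_q (H : MexInv n) (hb2 : v2 n + 2 ≤ v2 (n + 1)) :
    qv (n + 1) = Mx n ∧ v2 (n + 1) + qv (n + 1) = v3 (n + 1) := by
  set b := v2 (n + 1) with hbdef
  set T := (fun d => b + d) '' Dset n ∪ Set.Icc 1 b ∪ Fset n with hT
  have hTfin : T.Finite :=
    (((dset_finite n).image _).union (Set.finite_Icc 1 b)).union (fset_finite n)
  have hcmex : v3 (n + 1) = mex T := v3_succ n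
  have hc_not : v3 (n + 1) ∉ T := by rw [hcmex]; exact mex_not_mem hTfin
  have hc_min : ∀ m, m < v3 (n + 1) → m ∈ T := by
    intro m hm; rw [hcmex] at hm; exact mem_of_lt_mex hm
  have h0F : (0 : ℕ) ∈ Fset n := mem_Fset.mpr ⟨0, by omega, Or.inl v1_zero.symm⟩
  have hallT : ∀ m, m ≤ b → m ∈ T := by
    intro m hm
    rcases Nat.eq_zero_or_pos m with h | h
    · subst h; exact Or.inr h0F
    · exact Or.inl (Or.inr (Set.mem_Icc.mpr ⟨h, hm⟩))
  have hcb : b < v3 (n + 1) := by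
    rcases Nat.lt_or_ge b (v3 (n + 1)) with h | h
    · exact h
    · exact absurd (hallT _ h) hc_not
  have hordc : b + qv (n + 1) = v3 (n + 1) := by
    have : qv (n + 1) = v3 (n + 1) - v2 (n + 1) := rfl
    omega
  have hmemT : ∀ x, 1 ≤ x → (b + x ∈ T ↔ (x ∈ Dset n ∨ b + x ∈ Fset n)) := by
    intro x hx
    constructor
    · rintro ((⟨d, hd, hde⟩ | hIcc) | hF)
      · have hde' : b + d = b + x := hde
        have : x = d := by omega
        subst this; exact Or.inl hd
      · rw [Set.mem_Icc] at hIcc; omega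
      · exact Or.inr hF
    · rintro (h | h)
      · exact Or.inl (Or.inl ⟨x, h, rfl⟩)
      · exact Or.inr h
  have hq1 : 1 ≤ qv (n + 1) := by omega
  have hqnot : qv (n + 1) ∉ Dset n ∧ b + qv (n + 1) ∉ Fset n := by
    have h1 := hc_not
    rw [← hordc] at h1
    have h3 : ¬(qv (n + 1) ∈ Dset n ∨ b + qv (n + 1) ∈ Fset n) :=
      fun hc => h1 ((hmemT _ hq1).mpr hc)
    tauto
  have hqlb : Mx n ≤ qv (n + 1) := by
    by_contra h
    exact hqnot.1 (Mx_min hq1 (by omega))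
  have hnotF : b + Mx n ∉ Fset n := by
    intro hmem
    have h1 := maxF H _ hmem
    have hon := (H.ord n le_rfl).2
    have h2 := qlep H n le_rfl
    have h3 := H.MP n le_rfl
    omega
  have h4 : b + Mx n ∉ T := by
    rw [hmemT _ (Mx_spec n).1]
    push_neg
    exact ⟨(Mx_spec n).2, hnotF⟩
  have h5 := mex_le h4
  rw [← hcmex] at h5
  exact ⟨by omega, hordc⟩

end QStep

section Assemble
variable {n : ℕ}

theorem mexinv_step (H : MexInv n) : MexInv (n + 1) := by
  obtain ⟨hordb, hplb, hpub, hpD, hpmin⟩ := step_b H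
  have haS := v1_lt_succ n
  have haub := step_a H
  have hMpos := (Mx_spec n).1
  have hMnotD := (Mx_spec n).2
  have hpgapn : pv n < pv (n + 1) := lt_of_lt_of_le (H.MP n le_rfl) hplb
  have hbgapn : v2 n + 2 ≤ v2 (n + 1) := by
    have hon := (H.ord n le_rfl).1
    omega
  obtain ⟨hqeqn, hordc⟩ := step_q H hbgapn
  have hp1 : 1 ≤ pv (n + 1) := by omega
  -- new D memberships
  have hpD1 : pv (n + 1) ∈ Dset (n + 1) :=
    mem_Dset.mpr ⟨n + 1, le_rfl, Or.inl rfl⟩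
  have hqD1 : qv (n + 1) ∈ Dset (n + 1) :=
    mem_Dset.mpr ⟨n + 1, le_rfl, Or.inr (Or.inl rfl)⟩
  have hrD1 : pv (n + 1) + qv (n + 1) ∈ Dset (n + 1) :=
    mem_Dset.mpr ⟨n + 1, le_rfl, Or.inr (Or.inr (by omega))⟩
  have hfill : ∀ x, 1 ≤ x → x ≤ pv (n + 1) → x ∈ Dset (n + 1) := by
    intro x h1 h2
    rcases Nat.lt_or_ge x (Mx n) with h | h
    · exact Dset_mono (Mx_min h1 h)
    rcases Nat.eq_or_lt_of_le h with h' | h'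
    · rw [← h', ← hqeqn]; exact hqD1
    rcases Nat.eq_or_lt_of_le h2 with h'' | h''
    · rw [h'']; exact hpD1
    · rcases hpmin x h1 h'' with hD | hF
      · exact Dset_mono hD
      · exfalso
        rcases hpmin (Mx n) hMpos (by omega) with hD0 | hF0
        · exact hMnotD hD0
        obtain ⟨k0, hk0, hc0⟩ := Fhigh H le_rfl hF0
        obtain ⟨k, hk, hck⟩ := Fhigh H (by omega : Mx n ≤ x) hF
        have hne : k ≠ k0 := fun he => by subst he; omega
        rcases cpair H hk hk0 hne with hh | hh <;> omega
  have hMP1 : pv (n + 1) < Mx (n + 1) := by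
    rcases Nat.lt_or_ge (pv (n + 1)) (Mx (n + 1)) with h | h
    · exact h
    · exact absurd (hfill _ (Mx_spec (n + 1)).1 h) (Mx_spec (n + 1)).2
  have hqn1 : qv n + 1 ≤ qv (n + 1) := by
    have h1 := qlep H n le_rfl
    have h2 := H.MP n le_rfl
    omega
  have hMub1 : Mx (n + 1) ≤ pv (n + 1) + 2 := by
    have hana : ∀ y, y ∈ Dset (n + 1) → pv (n + 1) < y → y ≤ pv (n + 1) + 2 →
        (∃ j, 1 ≤ j ∧ j ≤ n ∧ y = pv j + qv j) ∨ y = pv (n + 1) + qv (n + 1) := by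
      intro y hy hy1 hy2
      rw [mem_Dset] at hy
      obtain ⟨k, hk, hck⟩ := hy
      rcases Nat.lt_or_ge k (n + 1) with hkn | hkn
      · have hyold : y ∈ Dset n := mem_Dset.mpr ⟨k, by omega, hck⟩
        exact Or.inl (Dhigh H hyold (by omega))
      · have hk1 : k = n + 1 := by omega
        subst hk1
        rcases hck with h | h | h
        · exfalso
          have h' : y = pv (n + 1) := h
          omega
        · exfalso
          have h' : y = qv (n + 1) := h
          omega
        · right
          omega
    have key : pv (n + 1) + 1 ∉ Dset (n + 1) ∨ pv (n + 1) + 2 ∉ Dset (n + 1) := by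
      by_contra hc
      push_neg at hc
      obtain ⟨h1, h2⟩ := hc
      have hr : pv n + qv n + 2 ≤ pv (n + 1) + qv (n + 1) := by omega
      rcases hana _ h1 (by omega) (by omega) with ⟨j, hj1, hjn, hjv⟩ | hnew1 <;>
        rcases hana _ h2 (by omega) (by omega) with ⟨j2, hj21, hj2n, hj2v⟩ | hnew2
      · have hne : j ≠ j2 := fun he => by subst he; omega
        rcases Rpair H hjn hj2n hne with hh | hh <;> omega
      · have hRj := Rle H j hjn
        omega
      · have hRj := Rle H j2 hj2n
        omega
      · omega
    rcases key with h | h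
    · have := Mx_le (show 0 < pv (n + 1) + 1 by omega) h
      omega
    · have := Mx_le (show 0 < pv (n + 1) + 2 by omega) h
      omega
  refine ⟨?_, ?_, ?_, ?_, ?_, ?_, ?_, ?_, ?_, ?_, ?_⟩
  · intro k hk
    rcases Nat.lt_or_ge k (n + 1) with h | h
    · exact H.ord k (by omega)
    · have : k = n + 1 := by omega
      subst this
      exact ⟨hordb, hordc⟩
  · intro k hk
    rcases Nat.lt_or_ge k n with h | h
    · exact H.amono k h
    · have : k = n := by omega
      subst this; exact haS
  · intro k hk
    rcases Nat.lt_or_ge k n with h | h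
    · exact H.aub k h
    · have : k = n := by omega
      subst this; exact haub
  · intro k hk
    rcases Nat.lt_or_ge k n with h | h
    · exact H.pgap k h
    · have : k = n := by omega
      subst this; exact hpgapn
  · intro k hk
    rcases Nat.lt_or_ge k n with h | h
    · exact H.qeq k h
    · have : k = n := by omega
      subst this; exact hqeqn
  · intro k hk
    rcases Nat.lt_or_ge k n with h | h
    · exact H.plb k h
    · have : k = n := by omega
      subst this; exact hplb
  · intro k hk
    rcases Nat.lt_or_ge k (n + 1) with h | h
    · exact H.MP k (by omega)
    · have : k = n + 1 := by omega
      subst this; exact hMP1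
  · intro k hk
    rcases Nat.lt_or_ge k (n + 1) with h | h
    · exact H.Mub k (by omega)
    · have : k = n + 1 := by omega
      subst this; exact hMub1
  · intro k hk
    rcases Nat.lt_or_ge k n with h | h
    · exact H.bgap k h
    · have : k = n := by omega
      subst this; exact hbgapn
  · intro k hk
    rcases Nat.lt_or_ge k n with h | h
    · exact H.bub k h
    · have hkn : k = n := by omega
      rw [hkn]
      have hon := (H.ord n le_rfl).1
      have hMubn := H.Mub n le_rfl
      omega
  · intro k hk
    rcases Nat.lt_or_ge k n with h | h
    · exact H.cgap k h
    · have hkn : k = n := by omega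
      rw [hkn]
      have hon := (H.ord n le_rfl).2
      have h1 := qlep H n le_rfl
      have h2 := H.MP n le_rfl
      omega

end Assemble

theorem mexinv_all (m : ℕ) : MexInv m := by
  induction m with
  | zero => exact mexinv_zero
  | succ k ih => exact mexinv_step ih

theorem stmt11 : ∀ n : ℕ,
    (v2 (n + 1) : ℤ) - v2 n ∈ ({2, 3, 4, 5, 6, 7, 8} : Set ℤ) := by
  intro n
  have H := mexinv_all (n + 1)
  have h1 := H.bgap n (by omega)
  have h2 := H.bub n (by omega)
  simp only [Set.mem_insert_iff, Set.mem_singleton_iff]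
  omega
end

section
/- With the sets F_n and D_n defined by the recursive Mex algorithm, for every n ≥ 0 any two distinct elements of F_n ∩ [Mex(F_n) + Mex(D_n), ∞) differ by at least 3. -/
namespace S16

-- mex basics
lemma mex_le {S : Set ℕ} {k : ℕ} (h : k ∉ S) : mex S ≤ k := Nat.sInf_le h

lemma lt_mex_mem {S : Set ℕ} {k : ℕ} (h : k < mex S) : k ∈ S := by
  by_contra hk
  exact absurd (mex_le hk) (by omega)

lemma mex_notMem {S : Set ℕ} (h : {m : ℕ | m ∉ S}.Nonempty) : mex S ∉ S :=
  Nat.sInf_mem h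

lemma mex_mono {S T : Set ℕ} (hST : S ⊆ T) (h : {m : ℕ | m ∉ T}.Nonempty) :
    mex S ≤ mex T :=
  mex_le (fun hm => mex_notMem h (hST hm))

lemma compl_ne {S : Set ℕ} (h : S.Finite) : {m : ℕ | m ∉ S}.Nonempty := by
  have := h.infinite_compl.nonempty
  simpa [Set.compl_def] using this

-- structure of coords/diffs
lemma coords_union (G H : Set (ℕ × ℕ × ℕ)) : coords (G ∪ H) = coords G ∪ coords H := by
  ext k; simp only [coords, Set.mem_setOf_eq, Set.mem_union]
  constructor
  · rintro ⟨x, hx | hx, h⟩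
    · exact Or.inl ⟨x, hx, h⟩
    · exact Or.inr ⟨x, hx, h⟩
  · rintro (⟨x, hx, h⟩ | ⟨x, hx, h⟩)
    · exact ⟨x, Or.inl hx, h⟩
    · exact ⟨x, Or.inr hx, h⟩

lemma diffs_union (G H : Set (ℕ × ℕ × ℕ)) : diffs (G ∪ H) = diffs G ∪ diffs H := by
  ext k; simp only [diffs, Set.mem_setOf_eq, Set.mem_union]
  constructor
  · rintro ⟨x, hx | hx, h⟩
    · exact Or.inl ⟨x, hx, h⟩
    · exact Or.inr ⟨x, hx, h⟩
  · rintro (⟨x, hx, h⟩ | ⟨x, hx, h⟩)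
    · exact ⟨x, Or.inl hx, h⟩
    · exact ⟨x, Or.inr hx, h⟩

lemma coords_singleton (t : ℕ × ℕ × ℕ) : coords {t} = {t.1, t.2.1, t.2.2} := by
  ext k; simp [coords]

lemma diffs_singleton (t : ℕ × ℕ × ℕ) :
    diffs {t} = {t.2.1 - t.1, t.2.2 - t.2.1, t.2.2 - t.1} := by
  ext k; simp [diffs]

lemma coords_finite {G : Set (ℕ × ℕ × ℕ)} (h : G.Finite) : (coords G).Finite := by
  have : coords G ⊆ (fun x : ℕ × ℕ × ℕ => x.1) '' G ∪
      ((fun x : ℕ × ℕ × ℕ => x.2.1) '' G ∪ (fun x : ℕ × ℕ × ℕ => x.2.2) '' G) := by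
    rintro k ⟨x, hx, h1 | h2 | h3⟩
    · exact Or.inl ⟨x, hx, h1.symm⟩
    · exact Or.inr (Or.inl ⟨x, hx, h2.symm⟩)
    · exact Or.inr (Or.inr ⟨x, hx, h3.symm⟩)
  exact Set.Finite.subset ((h.image _).union ((h.image _).union (h.image _))) this

lemma diffs_finite {G : Set (ℕ × ℕ × ℕ)} (h : G.Finite) : (diffs G).Finite := by
  have : diffs G ⊆ (fun x : ℕ × ℕ × ℕ => x.2.1 - x.1) '' G ∪
      ((fun x : ℕ × ℕ × ℕ => x.2.2 - x.2.1) '' G ∪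
        (fun x : ℕ × ℕ × ℕ => x.2.2 - x.1) '' G) := by
    rintro k ⟨x, hx, h1 | h2 | h3⟩
    · exact Or.inl ⟨x, hx, h1.symm⟩
    · exact Or.inr (Or.inl ⟨x, hx, h2.symm⟩)
    · exact Or.inr (Or.inr ⟨x, hx, h3.symm⟩)
  exact Set.Finite.subset ((h.image _).union ((h.image _).union (h.image _))) this

lemma Gset_finite : ∀ n, (Gset n).Finite
  | 0 => Set.finite_singleton _
  | n + 1 => ((Gset_finite n).union (Set.finite_singleton _))

lemma Fset_finite (n : ℕ) : (Fset n).Finite := coords_finite (Gset_finite n)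
lemma Dset_finite (n : ℕ) : (Dset n).Finite := diffs_finite (Gset_finite n)

lemma Fc_ne (n : ℕ) : {m : ℕ | m ∉ Fset n}.Nonempty := compl_ne (Fset_finite n)
lemma Dc_ne (n : ℕ) : {m : ℕ | m ∉ Dset n}.Nonempty := compl_ne (Dset_finite n)

lemma Gset_succ (n : ℕ) : Gset (n + 1) = Gset n ∪ {v (n + 1)} := rfl

lemma Fset_succ (n : ℕ) :
    Fset (n + 1) = Fset n ∪ {v1 (n + 1), v2 (n + 1), v3 (n + 1)} := by
  show coords (Gset n ∪ {v (n+1)}) = _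
  rw [coords_union, coords_singleton]
  rfl

lemma Dset_succ (n : ℕ) :
    Dset (n + 1) = Dset n ∪
      {v2 (n + 1) - v1 (n + 1), v3 (n + 1) - v2 (n + 1), v3 (n + 1) - v1 (n + 1)} := by
  show diffs (Gset n ∪ {v (n+1)}) = _
  rw [diffs_union, diffs_singleton]
  rfl

lemma v1_succ (n : ℕ) : v1 (n + 1) = mex (Fset n) := rfl

lemma v2_succ (n : ℕ) :
    v2 (n + 1) = mex ((fun d => v1 (n + 1) + d) '' Dset n ∪
      Set.Icc 1 (v1 (n + 1)) ∪ Fset n) := rfl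

lemma v3_succ (n : ℕ) :
    v3 (n + 1) = mex ((fun d => v2 (n + 1) + d) '' Dset n ∪
      Set.Icc 1 (v2 (n + 1)) ∪ Fset n) := rfl


lemma Fset_zero : Fset 0 = {0} := by
  show coords {((0:ℕ), (0:ℕ), (0:ℕ))} = {0}
  rw [coords_singleton]; simp

lemma Dset_zero : Dset 0 = {0} := by
  show diffs {((0:ℕ), (0:ℕ), (0:ℕ))} = {0}
  rw [diffs_singleton]; simp

lemma Fset_mono : ∀ {n N : ℕ}, n ≤ N → Fset n ⊆ Fset N := by
  intro n N h
  induction N, h using Nat.le_induction with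
  | base => exact le_refl _
  | succ N hN ih =>
      refine ih.trans ?_
      rw [Fset_succ]; exact Set.subset_union_left

lemma Dset_mono : ∀ {n N : ℕ}, n ≤ N → Dset n ⊆ Dset N := by
  intro n N h
  induction N, h using Nat.le_induction with
  | base => exact le_refl _
  | succ N hN ih =>
      refine ih.trans ?_
      rw [Dset_succ]; exact Set.subset_union_left

lemma v_zero : v 0 = (0, 0, 0) := rfl

lemma zero_mem_F (n : ℕ) : (0 : ℕ) ∈ Fset n :=
  Fset_mono (Nat.zero_le n) (by rw [Fset_zero]; rfl)

lemma zero_mem_D (n : ℕ) : (0 : ℕ) ∈ Dset n :=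
  Dset_mono (Nat.zero_le n) (by rw [Dset_zero]; rfl)

lemma vk_mem_F : ∀ k, v1 k ∈ Fset k ∧ v2 k ∈ Fset k ∧ v3 k ∈ Fset k := by
  intro k
  cases k with
  | zero =>
      constructor
      · exact zero_mem_F 0
      constructor
      · exact zero_mem_F 0
      · exact zero_mem_F 0
  | succ n =>
      rw [Fset_succ]
      refine ⟨Or.inr ?_, Or.inr ?_, Or.inr ?_⟩ <;> simp

lemma v1_mem_F {k n : ℕ} (h : k ≤ n) : v1 k ∈ Fset n := Fset_mono h (vk_mem_F k).1
lemma v2_mem_F {k n : ℕ} (h : k ≤ n) : v2 k ∈ Fset n := Fset_mono h (vk_mem_F k).2.1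
lemma v3_mem_F {k n : ℕ} (h : k ≤ n) : v3 k ∈ Fset n := Fset_mono h (vk_mem_F k).2.2

lemma mem_Fset : ∀ {n x : ℕ}, x ∈ Fset n →
    ∃ k, k ≤ n ∧ (x = v1 k ∨ x = v2 k ∨ x = v3 k) := by
  intro n
  induction n with
  | zero =>
      intro x hx
      rw [Fset_zero] at hx
      exact ⟨0, le_refl 0, Or.inl hx⟩
  | succ n ih =>
      intro x hx
      rw [Fset_succ] at hx
      rcases hx with hx | hx
      · obtain ⟨k, hk, h⟩ := ih hx
        exact ⟨k, by omega, h⟩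
      · rcases hx with h | h | h
        · exact ⟨n + 1, le_refl _, Or.inl h⟩
        · exact ⟨n + 1, le_refl _, Or.inr (Or.inl h)⟩
        · exact ⟨n + 1, le_refl _, Or.inr (Or.inr h)⟩

lemma mexF_pos (n : ℕ) : 1 ≤ mex (Fset n) :=
  Nat.pos_of_ne_zero (fun e => mex_notMem (Fc_ne n) (e ▸ zero_mem_F n))

lemma mexD_pos (n : ℕ) : 1 ≤ mex (Dset n) :=
  Nat.pos_of_ne_zero (fun e => mex_notMem (Dc_ne n) (e ▸ zero_mem_D n))

/-- The excluded set used in `step`. -/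
noncomputable def exc (n a : ℕ) : Set ℕ :=
  (fun d => a + d) '' Dset n ∪ Set.Icc 1 a ∪ Fset n

lemma v2_exc (n : ℕ) : v2 (n + 1) = mex (exc n (v1 (n + 1))) := rfl
lemma v3_exc (n : ℕ) : v3 (n + 1) = mex (exc n (v2 (n + 1))) := rfl

lemma exc_finite (n a : ℕ) : (exc n a).Finite :=
  (((Dset_finite n).image _).union (Set.finite_Icc _ _)).union (Fset_finite n)

lemma exc_ne (n a : ℕ) : {m : ℕ | m ∉ exc n a}.Nonempty := compl_ne (exc_finite n a)

lemma mex_exc_notMem (n a : ℕ) : mex (exc n a) ∉ exc n a := mex_notMem (exc_ne n a)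

lemma mex_exc_notF (n a : ℕ) : mex (exc n a) ∉ Fset n :=
  fun h => mex_exc_notMem n a (Or.inr h)

lemma mex_exc_notIm (n a : ℕ) : ∀ d ∈ Dset n, mex (exc n a) ≠ a + d :=
  fun d hd he => mex_exc_notMem n a (Or.inl (Or.inl ⟨d, hd, he.symm⟩))

lemma exc_cases {n a x : ℕ} (h : x ∈ exc n a) :
    (∃ d ∈ Dset n, x = a + d) ∨ (1 ≤ x ∧ x ≤ a) ∨ x ∈ Fset n := by
  rcases h with (h | h) | h
  · obtain ⟨d, hd, he⟩ := h
    exact Or.inl ⟨d, hd, he.symm⟩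
  · exact Or.inr (Or.inl (Set.mem_Icc.mp h))
  · exact Or.inr (Or.inr h)

lemma mem_exc_of_lt {n a x : ℕ} (h : x < mex (exc n a)) : x ∈ exc n a :=
  lt_mex_mem h

lemma mex_exc_lb (n a : ℕ) (ha : 1 ≤ a) : a + mex (Dset n) ≤ mex (exc n a) := by
  by_contra hcon
  push_neg at hcon
  apply mex_exc_notMem n a
  rcases le_or_gt (mex (exc n a)) a with h | h
  · have h0 : mex (exc n a) ≠ 0 := by
      intro he
      exact mex_exc_notMem n a (Or.inr (he ▸ zero_mem_F n))
    exact Or.inl (Or.inr (Set.mem_Icc.mpr ⟨by omega, h⟩))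
  · have hd : mex (exc n a) - a ∈ Dset n := lt_mex_mem (by omega)
    exact Or.inl (Or.inl ⟨mex (exc n a) - a, hd, by show a + (mex (exc n a) - a) = mex (exc n a); omega⟩)

/-- The inductive invariant package. -/
structure Pack (n : ℕ) : Prop where
  i1 : ∀ k, k < n → v3 (k + 1) = v2 (k + 1) + mex (Dset k)
  i2 : ∀ k, k < n → v2 (k + 1) + 1 ≤ v1 (k + 1) + mex (Dset (k + 1))
  i3 : ∀ k, k < n → mex (Dset k) + 1 ≤ mex (Dset (k + 1))
  i4 : ∀ k, k < n → v3 k + 3 ≤ v3 (k + 1)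
  i6 : v3 n + 3 ≤ mex (Fset n) + 2 * mex (Dset n)
  i7 : ∀ d ∈ Dset n, d + 2 ≤ 2 * mex (Dset n)
  i8 : ∀ d, mex (Dset n) ≤ d → d ∈ Dset n → d + 1 ∉ Dset n
  i9 : ∀ k, k < n → mex (Fset k) + 1 ≤ mex (Fset (k + 1))

lemma mex_singleton_zero : mex ({0} : Set ℕ) = 1 := by
  have h1 : mex ({0} : Set ℕ) ≤ 1 := mex_le (by simp)
  have h2 : mex ({0} : Set ℕ) ∉ ({0} : Set ℕ) := mex_notMem ⟨1, by simp⟩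
  simp only [Set.mem_singleton_iff] at h2
  omega

lemma pack_zero : Pack 0 := by
  refine ⟨?_, ?_, ?_, ?_, ?_, ?_, ?_, ?_⟩
  · intro k hk; omega
  · intro k hk; omega
  · intro k hk; omega
  · intro k hk; omega
  · show v3 0 + 3 ≤ _
    have h1 : v3 0 = 0 := rfl
    rw [h1, Fset_zero, Dset_zero, mex_singleton_zero]
  · intro d hd
    rw [Dset_zero] at hd
    simp only [Set.mem_singleton_iff] at hd
    rw [Dset_zero, mex_singleton_zero]
    omega
  · intro d hd hdD
    rw [Dset_zero, mex_singleton_zero] at hd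
    rw [Dset_zero] at hdD
    simp only [Set.mem_singleton_iff] at hdD
    omega
  · intro k hk; omega

lemma c_gap {n : ℕ} (P : Pack n) : ∀ j k, j < k → k ≤ n → v3 j + 3 ≤ v3 k := by
  intro j k hjk
  induction k, hjk using Nat.le_induction with
  | base => intro hk; exact P.i4 j (by omega)
  | succ k hk' ih =>
      intro hk
      have h1 := ih (by omega)
      have h2 := P.i4 k (by omega)
      omega

/-- every element of `F n` at or above the threshold is some `v3 k`, `1 ≤ k ≤ n`. -/
lemma above_eq_c {n : ℕ} (P : Pack n) {x : ℕ} (hx : x ∈ Fset n)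
    (hT : mex (Fset n) + mex (Dset n) ≤ x) :
    ∃ k, 1 ≤ k ∧ k ≤ n ∧ v3 k = x := by
  obtain ⟨k, hkn, hcase⟩ := mem_Fset hx
  cases k with
  | zero =>
      exfalso
      have h1 := mexF_pos n
      have h2 := mexD_pos n
      have hx0 : x = 0 := by
        rcases hcase with h | h | h <;> exact h
      omega
  | succ j =>
      have hjn : j < n := hkn
      have hv1 : v1 (j + 1) + 1 ≤ mex (Fset n) := by
        have h1 := P.i9 j hjn
        have h2 : mex (Fset (j + 1)) ≤ mex (Fset n) :=
          mex_mono (Fset_mono (by omega)) (Fc_ne n)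
        rw [v1_succ]
        omega
      have hvD : mex (Dset (j + 1)) ≤ mex (Dset n) :=
        mex_mono (Dset_mono (by omega)) (Dc_ne n)
      rcases hcase with h | h | h
      · exfalso
        have := mexD_pos n
        omega
      · exfalso
        have h2 := P.i2 j hjn
        omega
      · exact ⟨j + 1, by omega, hkn, h.symm⟩

lemma pack_step (n : ℕ) (P : Pack n) : Pack (n + 1) := by
  have hFne := Fc_ne n
  have hDne := Dc_ne n
  have hf1 := mexF_pos n
  have hm1 := mexD_pos n
  have hmD : mex (Dset n) ∉ Dset n := mex_notMem hDne
  have hDlt : ∀ d, d < mex (Dset n) → d ∈ Dset n := fun d hd => lt_mex_mem hd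
  have hFlt : ∀ x, x < mex (Fset n) → x ∈ Fset n := fun x hx => lt_mex_mem hx
  -- abbreviations
  set a := v1 (n + 1) with ha
  set b := v2 (n + 1) with hb
  set c := v3 (n + 1) with hc
  set m := mex (Dset n) with hm
  have haf : a = mex (Fset n) := v1_succ n
  -- b facts
  have hbF : b ∉ Fset n := by rw [hb, v2_exc]; exact mex_exc_notF n _
  have hbIm : ∀ d ∈ Dset n, b ≠ a + d := by rw [hb, v2_exc]; exact mex_exc_notIm n _
  have hba : a + m ≤ b := by rw [hb, v2_exc]; exact mex_exc_lb n _ (by omega)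
  have hbcase : ∀ x, x < b → (∃ d ∈ Dset n, x = a + d) ∨ (1 ≤ x ∧ x ≤ a) ∨ x ∈ Fset n := by
    intro x hx
    rw [hb, v2_exc] at hx
    exact exc_cases (mem_exc_of_lt hx)
  -- c lower facts
  have hcF : c ∉ Fset n := by rw [hc, v3_exc]; exact mex_exc_notF n _
  have hcb : b + m ≤ c := by rw [hc, v3_exc]; exact mex_exc_lb n _ (by omega)
  -- collision analysis
  have hcol1 : a + m + 1 ≤ b → ∃ j, 1 ≤ j ∧ j ≤ n ∧ v3 j = a + m := by
    intro h
    rcases hbcase (a + m) (by omega) with ⟨d, hd, he⟩ | ⟨h1, h2⟩ | hF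
    · exact absurd (show d = m by omega) (fun e => hmD (e ▸ hd))
    · omega
    · obtain ⟨j, hj1, hjn, hj⟩ := above_eq_c P hF (by omega)
      exact ⟨j, hj1, hjn, hj⟩
  have hmid : ∀ i, i = 1 ∨ i = 2 → a + m + i + 1 ≤ b → m + i ∈ Dset n := by
    intro i hi h
    obtain ⟨j, hj1, hjn, hj⟩ := hcol1 (by omega)
    rcases hbcase (a + m + i) (by omega) with ⟨d, hd, he⟩ | ⟨h1, h2⟩ | hF
    · have : d = m + i := by omega
      exact this ▸ hd
    · omega
    · exfalso
      obtain ⟨k, hk1, hkn, hk⟩ := above_eq_c P hF (by omega)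
      have hne : j ≠ k := by
        intro e
        rw [e, hk] at hj
        omega
      rcases lt_or_gt_of_ne hne with hlt | hlt
      · have := c_gap P j k hlt hkn; omega
      · have := c_gap P k j hlt hjn; omega
  have hb2 : b ≤ a + m + 2 := by
    by_contra hcon
    push_neg at hcon
    have h1 : m + 1 ∈ Dset n := hmid 1 (by omega) (by omega)
    have h2 : m + 2 ∈ Dset n := hmid 2 (by omega) (by omega)
    have h3 := P.i8 (m + 1) (by omega) h1
    have he : m + 1 + 1 = m + 2 := by omega
    rw [he] at h3
    exact h3 h2
  -- c = b + m
  have hcnotF : b + m ∉ Fset n := by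
    intro hmem
    obtain ⟨k, hk1, hkn, hk⟩ := above_eq_c P hmem (by omega)
    obtain ⟨j, rfl⟩ : ∃ j, k = j + 1 := ⟨k - 1, by omega⟩
    have hi1 := P.i1 j (by omega)
    have hi2 := P.i2 j (by omega)
    have hmj : mex (Dset j) ≤ m := mex_mono (Dset_mono (by omega)) hDne
    have hmj1 : mex (Dset (j + 1)) ≤ m := mex_mono (Dset_mono (by omega)) hDne
    have hfj : mex (Fset j) + 1 ≤ mex (Fset n) := by
      have h1 := P.i9 j (by omega)
      have h2 : mex (Fset (j + 1)) ≤ mex (Fset n) :=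
        mex_mono (Fset_mono (by omega)) hFne
      omega
    rw [v1_succ] at hi2
    omega
  have hceq : c = b + m := by
    have hle : c ≤ b + m := by
      rw [hc, v3_exc]
      apply mex_le
      rintro ((hx | hx) | hx)
      · obtain ⟨d, hd, he⟩ := hx
        simp only at he
        have : d = m := by omega
        exact hmD (this ▸ hd)
      · rw [Set.mem_Icc] at hx
        omega
      · exact hcnotF hx
    omega
  -- new differences
  have hab : a < b := by omega
  have hbc : b < c := by omega
  have hDs : Dset (n + 1) = Dset n ∪ {b - a, c - b, c - a} := Dset_succ n
  have hmemm : m ∈ Dset (n + 1) := by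
    rw [hDs]
    right
    simp only [Set.mem_insert_iff, Set.mem_singleton_iff]
    omega
  have hmemβ : b - a ∈ Dset (n + 1) := by
    rw [hDs]
    right
    simp only [Set.mem_insert_iff, Set.mem_singleton_iff]
    tauto
  have hD'ne := Dc_ne (n + 1)
  have hm'not : mex (Dset (n + 1)) ∉ Dset (n + 1) := mex_notMem hD'ne
  have hsub : Dset n ⊆ Dset (n + 1) := Dset_mono (by omega)
  have hm'm : m + 1 ≤ mex (Dset (n + 1)) := by
    by_contra hcon
    push_neg at hcon
    rcases Nat.lt_or_ge (mex (Dset (n + 1))) m with h | h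
    · exact hm'not (hsub (hDlt _ h))
    · have he : mex (Dset (n + 1)) = m := by omega
      exact hm'not (he ▸ hmemm)
  have hm'β : (b - a) + 1 ≤ mex (Dset (n + 1)) := by
    have hne1 : mex (Dset (n + 1)) ≠ b - a := fun e => hm'not (e ▸ hmemβ)
    by_contra hcon
    push_neg at hcon
    have hm'eq : mex (Dset (n + 1)) = m + 1 := by omega
    have hβeq : a + m + 2 ≤ b := by omega
    have h1 : m + 1 ∈ Dset n := hmid 1 (by omega) (by omega)
    exact hm'not (hm'eq ▸ hsub h1)
  -- new mex F bound
  have hf'b : mex (Fset n) + 1 ≤ mex (Fset (n + 1)) := by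
    have hsubF : Fset n ⊆ Fset (n + 1) := Fset_mono (by omega)
    have hnot := mex_notMem (Fc_ne (n + 1))
    by_contra hcon
    push_neg at hcon
    rcases Nat.lt_or_ge (mex (Fset (n + 1))) (mex (Fset n)) with h | h
    · exact hnot (hsubF (hFlt _ h))
    · have he : mex (Fset (n + 1)) = mex (Fset n) := by omega
      have hfmem : mex (Fset n) ∈ Fset (n + 1) := by
        rw [← haf]
        exact v1_mem_F (le_refl (n + 1))
      exact hnot (he ▸ hfmem)
  -- assemble
  have hsplit : ∀ k, k < n + 1 → k < n ∨ k = n := fun k hk => by omega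
  refine ⟨?_, ?_, ?_, ?_, ?_, ?_, ?_, ?_⟩
  · intro k hk
    rcases hsplit k hk with h | rfl
    · exact P.i1 k h
    · exact hceq
  · intro k hk
    rcases hsplit k hk with h | rfl
    · exact P.i2 k h
    · omega
  · intro k hk
    rcases hsplit k hk with h | rfl
    · exact P.i3 k h
    · exact hm'm
  · intro k hk
    rcases hsplit k hk with h | rfl
    · exact P.i4 k h
    · have h6 := P.i6
      omega
  · have h6 := P.i6
    omega
  · intro d hd
    rw [hDs] at hd
    rcases hd with hd | hd
    · have := P.i7 d hd
      omega
    · simp only [Set.mem_insert_iff, Set.mem_singleton_iff] at hd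
      rcases hd with rfl | rfl | rfl <;> omega
  · intro d hd hdD hdD1
    rw [hDs] at hdD hdD1
    simp only [Set.mem_union, Set.mem_insert_iff, Set.mem_singleton_iff] at hdD hdD1
    rcases hdD with h1 | h1 | h1 | h1
    · rcases hdD1 with h2 | h2 | h2 | h2
      · exact P.i8 d (by omega) h1 h2
      · omega
      · omega
      · have := P.i7 d h1
        omega
    · omega
    · omega
    · rcases hdD1 with h2 | h2 | h2 | h2
      · have := P.i7 (d + 1) h2
        omega
      · omega
      · omega
      · omega
  · intro k hk
    rcases hsplit k hk with h | rfl
    · exact P.i9 k h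
    · exact hf'b

lemma pack (n : ℕ) : Pack n := by
  induction n with
  | zero => exact pack_zero
  | succ n ih => exact pack_step n ih

end S16

theorem stmt16 : ∀ n : ℕ, ∀ a ∈ Fset n, ∀ b ∈ Fset n,
    mex (Fset n) + mex (Dset n) ≤ a → mex (Fset n) + mex (Dset n) ≤ b → a ≠ b →
    3 ≤ |(a : ℤ) - b| := by
  intro n x hx y hy hTx hTy hxy
  have P := S16.pack n
  obtain ⟨j, hj1, hjn, hj⟩ := S16.above_eq_c P hx hTx
  obtain ⟨k, hk1, hkn, hk⟩ := S16.above_eq_c P hy hTy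
  have hne : j ≠ k := by
    intro e
    rw [e, hk] at hj
    exact hxy hj.symm
  rcases lt_or_gt_of_ne hne with hlt | hlt
  · have h := S16.c_gap P j k hlt hkn
    rw [hj, hk] at h
    rw [abs_sub_comm]
    rw [abs_of_nonneg (by push_cast; omega)]
    push_cast
    omega
  · have h := S16.c_gap P k j hlt hjn
    rw [hj, hk] at h
    rw [abs_of_nonneg (by push_cast; omega)]
    push_cast
    omega
end

section
/- The polynomial 8x⁵ − 44x⁴ + 54x³ + 39x² − 60x − 22 is irreducible over ℚ. -/
open Polynomial

private lemma h3' : (3 : (ZMod 3)[X]) = 0 := by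
  have := map_natCast (C : ZMod 3 →+* (ZMod 3)[X]) 3
  rw [show ((3:ℕ):ZMod 3) = 0 by decide, map_zero] at this
  exact_mod_cast this.symm

private lemma quad_not_dvd (b c r1 r0 : ZMod 3) (d : (ZMod 3)[X])
    (h : (X^5 + X^4 + C 2 : (ZMod 3)[X]) = (X^2 + (C b * X + C c)) * d + (C r1 * X + C r0))
    (hr : ¬(r1 = 0 ∧ r0 = 0)) :
    ¬ (X^2 + (C b * X + C c)) ∣ (X^5 + X^4 + C 2 : (ZMod 3)[X]) := by
  intro hdvd
  have hq : (X^2 + (C b * X + C c) : (ZMod 3)[X]).degree = 2 := by compute_degree!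
  have h1 : (X^2 + (C b * X + C c) : (ZMod 3)[X]) ∣ (C r1 * X + C r0) :=
    (dvd_add_right (Dvd.intro d rfl)).mp (h ▸ hdvd)
  have h2 : (C r1 * X + C r0 : (ZMod 3)[X]) = 0 :=
    Polynomial.eq_zero_of_dvd_of_degree_lt h1 (by
      rw [hq]; exact lt_of_le_of_lt degree_linear_le (by decide))
  apply hr
  constructor
  · have := congrArg (fun p => Polynomial.coeff p 1) h2
    simpa using this
  · have := congrArg (fun p => Polynomial.coeff p 0) h2
    simpa using this

private lemma one_le_natDegree_of_not_isUnit {K : Type*} [Field K] {g : K[X]}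
    (h0 : g ≠ 0) (hu : ¬ IsUnit g) : 1 ≤ g.natDegree := by
  by_contra hlt
  have hd : g.natDegree = 0 := by omega
  have hg := eq_C_of_natDegree_eq_zero hd
  apply hu
  rw [hg]
  refine isUnit_C.mpr (isUnit_iff_ne_zero.mpr (fun hc => h0 ?_))
  rw [hg, hc, map_zero]

private lemma f3_irred : Irreducible (X^5 + X^4 + C 2 : (ZMod 3)[X]) := by
  have hmon : (X^5 + X^4 + C 2 : (ZMod 3)[X]).Monic := by monicity!
  have hdeg5 : (X^5 + X^4 + C 2 : (ZMod 3)[X]).natDegree = 5 := by compute_degree!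
  have hne : (X^5 + X^4 + C 2 : (ZMod 3)[X]) ≠ 0 := hmon.ne_zero
  have noroot : ∀ a : ZMod 3, ¬ (X^5 + X^4 + C 2 : (ZMod 3)[X]).IsRoot a := by
    intro a
    rcases (by revert a; decide : ∀ x : ZMod 3, x = 0 ∨ x = 1 ∨ x = 2) a with h | h | h <;> subst h <;> simp [IsRoot] <;> decide
  constructor
  · intro h
    have := natDegree_eq_zero_of_isUnit h
    rw [hdeg5] at this
    exact absurd this (by norm_num)
  · intro g h hgh
    by_contra hcon
    push_neg at hcon
    obtain ⟨hgu, hhu⟩ := hcon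
    have hg0 : g ≠ 0 := fun hg => hne (by rw [hgh, hg, zero_mul])
    have hh0 : h ≠ 0 := fun hh => hne (by rw [hgh, hh, mul_zero])
    have hsum : g.natDegree + h.natDegree = 5 := by
      rw [← natDegree_mul hg0 hh0, ← hgh, hdeg5]
    have hg1 := one_le_natDegree_of_not_isUnit hg0 hgu
    have hh1 := one_le_natDegree_of_not_isUnit hh0 hhu
    obtain ⟨k, hkdvd, hk0, hklo, hkhi⟩ :
        ∃ k : (ZMod 3)[X], k ∣ (X^5 + X^4 + C 2 : (ZMod 3)[X]) ∧ k ≠ 0 ∧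
          1 ≤ k.natDegree ∧ k.natDegree ≤ 2 := by
      rcases le_or_gt g.natDegree 2 with hle | hgt
      · exact ⟨g, ⟨h, hgh⟩, hg0, hg1, hle⟩
      · exact ⟨h, ⟨g, by rw [hgh]; ring⟩, hh0, hh1, by omega⟩
    have lc_ne : k.leadingCoeff ≠ 0 := leadingCoeff_ne_zero.mpr hk0
    set g' : (ZMod 3)[X] := k * C k.leadingCoeff⁻¹ with hg'def
    have hmon' : g'.Monic := monic_mul_leadingCoeff_inv hk0
    have hdvdk : g' ∣ k :=
      ⟨C k.leadingCoeff, by rw [hg'def, mul_assoc, ← C_mul, inv_mul_cancel₀ lc_ne, C_1, mul_one]⟩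
    have hdvd : g' ∣ (X^5 + X^4 + C 2 : (ZMod 3)[X]) := hdvdk.trans hkdvd
    have hdeg' : g'.natDegree = k.natDegree :=
      natDegree_mul_C (inv_ne_zero lc_ne)
    have hcases : g'.natDegree = 1 ∨ g'.natDegree = 2 := by omega
    rcases hcases with h1 | h2
    · -- linear factor gives a root
      obtain ⟨a, b, hab⟩ := exists_eq_X_add_C_of_natDegree_le_one (le_of_eq h1)
      have ha : a = 1 := by
        have hc := hmon'.coeff_natDegree
        rw [h1, hab] at hc
        simpa using hc
      obtain ⟨m, hm⟩ := hdvd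
      have : (X^5 + X^4 + C 2 : (ZMod 3)[X]).IsRoot (-b) := by
        rw [hm, hab, ha]
        simp [IsRoot]
      exact noroot (-b) this
    · -- quadratic factor
      have hsub : (g' - X^2).natDegree ≤ 1 := by
        rw [natDegree_le_iff_coeff_eq_zero]
        intro m hm
        rw [coeff_sub, coeff_X_pow]
        by_cases hm2 : m = 2
        · subst hm2
          have hc := hmon'.coeff_natDegree
          rw [h2] at hc
          simp [hc]
        · rw [if_neg hm2, coeff_eq_zero_of_natDegree_lt (by omega : g'.natDegree < m)]
          simp
      obtain ⟨b, c, hbc⟩ := exists_eq_X_add_C_of_natDegree_le_one hsub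
      have hg'eq : g' = X^2 + (C b * X + C c) := by rw [← hbc]; ring
      rw [hg'eq] at hdvd
      have trich : ∀ x : ZMod 3, x = 0 ∨ x = 1 ∨ x = 2 := by decide
      rcases trich b with hb | hb | hb <;> rcases trich c with hc | hc | hc <;>
        subst hb <;> subst hc
      · exact quad_not_dvd 0 0 0 2 (X^3 + X^2)
          (by simp only [map_ofNat, map_one, map_zero]; ring) (by decide) hdvd
      · exact quad_not_dvd 0 1 1 0 (X^3 + X^2 + 2*X + 2)
          (by simp only [map_ofNat, map_one, map_zero]
              linear_combination (-(X^3 + X^2 + X) : (ZMod 3)[X]) * h3') (by decide) hdvd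
      · exact quad_not_dvd 0 2 1 0 (X^3 + X^2 + X + 1)
          (by simp only [map_ofNat, map_one, map_zero]
              linear_combination (-(X^3 + X^2 + X) : (ZMod 3)[X]) * h3') (by decide) hdvd
      · exact quad_not_dvd 1 0 0 2 (X^3)
          (by simp only [map_ofNat, map_one, map_zero]; ring) (by decide) hdvd
      · exact quad_not_dvd 1 1 0 1 (X^3 + 2*X + 1)
          (by simp only [map_ofNat, map_one, map_zero]
              linear_combination (-(X^3 + X^2 + X) : (ZMod 3)[X]) * h3') (by decide) hdvd
      · exact quad_not_dvd 1 2 2 1 (X^3 + X + 2)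
          (by simp only [map_ofNat, map_one, map_zero]
              linear_combination (-(X^3 + X^2 + 2*X + 1) : (ZMod 3)[X]) * h3') (by decide) hdvd
      · exact quad_not_dvd 2 0 2 2 (X^3 + 2*X^2 + 2*X + 2)
          (by simp only [map_ofNat, map_one, map_zero]
              linear_combination (-(X^4 + 2*X^3 + 2*X^2 + 2*X) : (ZMod 3)[X]) * h3') (by decide) hdvd
      · exact quad_not_dvd 2 1 1 0 (X^3 + 2*X^2 + X + 2)
          (by simp only [map_ofNat, map_one, map_zero]
              linear_combination (-(X^4 + 2*X^3 + 2*X^2 + 2*X) : (ZMod 3)[X]) * h3') (by decide) hdvd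
      · exact quad_not_dvd 2 2 2 1 (X^3 + 2*X^2 + 2)
          (by simp only [map_ofNat, map_one, map_zero]
              linear_combination (-(X^4 + 2*X^3 + 2*X^2 + 2*X + 1) : (ZMod 3)[X]) * h3') (by decide) hdvd

private noncomputable def Qz : ℤ[X] :=
  X^5 - C 44 * X^4 + C 432 * X^3 + C 2496 * X^2 - C 30720 * X - C 90112

private lemma Qz_monic : Qz.Monic := by unfold Qz; monicity!

private lemma Qz_map_zmod3 :
    Qz.map (Int.castRingHom (ZMod 3)) = (X^5 + X^4 + C 2 : (ZMod 3)[X]) := by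
  unfold Qz
  simp only [Polynomial.map_add, Polynomial.map_sub, Polynomial.map_mul, Polynomial.map_pow,
    Polynomial.map_X, Polynomial.map_C]
  rw [show ((Int.castRingHom (ZMod 3)) 44 : ZMod 3) = 2 by decide,
    show ((Int.castRingHom (ZMod 3)) 432 : ZMod 3) = 0 by decide,
    show ((Int.castRingHom (ZMod 3)) 2496 : ZMod 3) = 0 by decide,
    show ((Int.castRingHom (ZMod 3)) 30720 : ZMod 3) = 0 by decide,
    show ((Int.castRingHom (ZMod 3)) 90112 : ZMod 3) = 1 by decide]
  rw [show (C (2 : ZMod 3)) = 2 from map_ofNat C 2, show (C (1 : ZMod 3)) = 1 from map_one C,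
    show (C (0 : ZMod 3)) = 0 from map_zero C]
  linear_combination (-X^4 - 1 : (ZMod 3)[X]) * h3'

private lemma Qz_irred : Irreducible Qz :=
  Qz_monic.irreducible_of_irreducible_map (Int.castRingHom (ZMod 3)) Qz
    (Qz_map_zmod3 ▸ f3_irred)

private lemma Qq_irred : Irreducible (Qz.map (algebraMap ℤ ℚ)) :=
  Qz_monic.irreducible_iff_irreducible_map_fraction_map.mp Qz_irred

theorem stmt17 :
    Irreducible (C (8 : ℚ) * X ^ 5 - C 44 * X ^ 4 + C 54 * X ^ 3 +
      C 39 * X ^ 2 - C 60 * X - C 22) := by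
  set P : ℚ[X] := C (8 : ℚ) * X ^ 5 - C 44 * X ^ 4 + C 54 * X ^ 3 +
      C 39 * X ^ 2 - C 60 * X - C 22 with hP
  have hP5 : P.natDegree = 5 := by rw [hP]; compute_degree!
  have hPne : P ≠ 0 := fun h => by simp [h] at hP5
  have hl1 : ((C (8⁻¹ : ℚ) * X : ℚ[X])).natDegree = 1 := by compute_degree!
  have key : Qz.map (algebraMap ℤ ℚ) = C (4096 : ℚ) * (P.comp (C (8⁻¹ : ℚ) * X)) := by
    rw [hP]
    unfold Qz
    simp only [Polynomial.map_add, Polynomial.map_sub, Polynomial.map_mul, Polynomial.map_pow,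
      Polynomial.map_X, Polynomial.map_C, add_comp, sub_comp, mul_comp, pow_comp, C_comp, X_comp]
    simp only [map_ofNat]
    have h8 : (8 : ℚ[X]) * C (8⁻¹ : ℚ) = 1 := by
      rw [show (8 : ℚ[X]) = C (8 : ℚ) from (map_ofNat C 8).symm, ← C_mul]
      norm_num
    set t : ℚ[X] := (8 : ℚ[X]) * C (8⁻¹ : ℚ) with ht
    linear_combination (-X^5*(t^4+t^3+t^2+t+1) + 44*X^4*(t^3+t^2+t+1) - 432*X^3*(t^2+t+1)
      - 2496*X^2*(t+1) + 30720*X) * h8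
  have unit_of_comp : ∀ g : ℚ[X], g ≠ 0 → IsUnit (g.comp (C (8⁻¹ : ℚ) * X)) → IsUnit g := by
    intro g hg0 hu
    have hd := natDegree_eq_zero_of_isUnit hu
    rw [natDegree_comp, hl1, mul_one] at hd
    have hgC := eq_C_of_natDegree_eq_zero hd
    rw [hgC]
    refine isUnit_C.mpr (isUnit_iff_ne_zero.mpr (fun hc => hg0 ?_))
    rw [hgC, hc, map_zero]
  constructor
  · intro h
    have := natDegree_eq_zero_of_isUnit h
    rw [hP5] at this
    exact absurd this (by norm_num)
  · intro g h hgh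
    have hg0 : g ≠ 0 := fun hg => hPne (by rw [hgh, hg, zero_mul])
    have hh0 : h ≠ 0 := fun hh => hPne (by rw [hgh, hh, mul_zero])
    have hfac : Qz.map (algebraMap ℤ ℚ) =
        (C (4096 : ℚ) * g.comp (C (8⁻¹ : ℚ) * X)) * h.comp (C (8⁻¹ : ℚ) * X) := by
      rw [key, hgh, mul_comp, mul_assoc]
    rcases Qq_irred.isUnit_or_isUnit hfac with hu | hu
    · exact Or.inl (unit_of_comp g hg0 (isUnit_of_mul_isUnit_right
        (by rwa [mul_comm] at hu)))
    · exact Or.inr (unit_of_comp h hh0 hu)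
end
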